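/- (Remark 1) Let y = A·x_S (noiseless measurements) where x_S ∈ ℝⁿ is K-sparse with support S, and A satisfies the RIP of order 3K with constant δ_{3K} and of order 4K with constant δ_{4K} < 1, with ρ_{4K} < 1. Let x^0, x^1, …, x^k be successive CoSaMP iterates with x^0 = 0. If ρ_{4K}^k·‖x_S‖ < x*_K, equivalently k > ln(‖x_S‖/x*_K)/ln(1/ρ_{4K}), then x^k = x_S. -/

import Mathlib

open Finset

/-- Euclidean norm of a vector. -/
noncomputable def euclNorm {d : ℕ} (x : Fin d → ℝ) : ℝ := Real.sqrt (∑ i, x i ^ 2)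

/-- The support of a vector, as a finite set of indices. -/
noncomputable def supp {d : ℕ} (x : Fin d → ℝ) : Finset (Fin d) :=
  Finset.univ.filter (fun i => x i ≠ 0)

/-- `restrict x T` agrees with `x` on `T` and is zero outside `T`. -/
def restrict {d : ℕ} (x : Fin d → ℝ) (T : Finset (Fin d)) : Fin d → ℝ :=
  fun i => if i ∈ T then x i else 0

/-- `A` satisfies the Restricted Isometry Property of order `L` with constant `δ ∈ (0,1)`. -/
def RIP {m d : ℕ} (A : Matrix (Fin m) (Fin d) ℝ) (L : ℕ) (δ : ℝ) : Prop :=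
  0 < δ ∧ δ < 1 ∧
  ∀ x : Fin d → ℝ, (supp x).card ≤ L →
    (1 - δ) * euclNorm x ^ 2 ≤ euclNorm (A.mulVec x) ^ 2 ∧
    euclNorm (A.mulVec x) ^ 2 ≤ (1 + δ) * euclNorm x ^ 2

/-- `u` is the least-squares solution on the index set `U`: it is supported on `U` and
`y - A u` is orthogonal to `A z` whenever `z` is supported on `U`. -/
def LeastSq {m d : ℕ} (A : Matrix (Fin m) (Fin d) ℝ) (y : Fin m → ℝ)
    (U : Finset (Fin d)) (u : Fin d → ℝ) : Prop :=
  supp u ⊆ U ∧ ∀ z : Fin d → ℝ, supp z ⊆ U →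
    ∑ i, (y i - A.mulVec u i) * A.mulVec z i = 0

/-- One CoSaMP iteration with sparsity `K`, mapping the iterate `xprev` to `xnext`:
identification (`h`, the `2K` largest residual correlations), augmentation
(`supp xprev ∪ h`), least-squares estimation (`u`), and hard-thresholding update. -/
def CoSaMPStep {m d : ℕ} (K : ℕ) (A : Matrix (Fin m) (Fin d) ℝ) (y : Fin m → ℝ)
    (xprev xnext : Fin d → ℝ) : Prop :=
  ∃ (h Snext : Finset (Fin d)) (u : Fin d → ℝ),
    h.card = 2 * K ∧
    (∀ i ∈ h, ∀ j ∉ h,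
      |A.transpose.mulVec (y - A.mulVec xprev) j| ≤
        |A.transpose.mulVec (y - A.mulVec xprev) i|) ∧
    LeastSq A y (supp xprev ∪ h) u ∧
    Snext ⊆ supp xprev ∪ h ∧ Snext.card = K ∧
    (∀ i ∈ Snext, ∀ j ∉ Snext, |u j| ≤ |u i|) ∧
    xnext = restrict u Snext

open Matrix

namespace CoSaMPAux

variable {d m : ℕ}

lemma en_sq (x : Fin d → ℝ) : euclNorm x ^ 2 = ∑ i, x i ^ 2 :=
  Real.sq_sqrt (Finset.sum_nonneg fun i _ => sq_nonneg _)

lemma en_nonneg (x : Fin d → ℝ) : 0 ≤ euclNorm x := Real.sqrt_nonneg _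

lemma en_eq_norm (x : Fin d → ℝ) :
    euclNorm x = ‖(WithLp.equiv 2 (Fin d → ℝ)).symm x‖ := by
  simp only [euclNorm, EuclideanSpace.norm_eq, WithLp.equiv_symm_apply, PiLp.toLp_apply,
    Real.norm_eq_abs, sq_abs]

lemma en_triangle (x y : Fin d → ℝ) : euclNorm (x + y) ≤ euclNorm x + euclNorm y := by
  rw [en_eq_norm, en_eq_norm, en_eq_norm]
  exact norm_add_le _ _

lemma cauchy_schwarz (x y : Fin d → ℝ) : x ⬝ᵥ y ≤ euclNorm x * euclNorm y := by
  rw [en_eq_norm, en_eq_norm]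
  have := real_inner_le_norm ((WithLp.equiv 2 (Fin d → ℝ)).symm x)
    ((WithLp.equiv 2 (Fin d → ℝ)).symm y)
  rw [PiLp.inner_apply] at this
  simpa [dotProduct, WithLp.equiv_symm_apply, PiLp.toLp_apply, mul_comm] using this

lemma mem_supp {x : Fin d → ℝ} {i : Fin d} : i ∈ supp x ↔ x i ≠ 0 := by
  simp [supp]

lemma not_mem_supp {x : Fin d → ℝ} {i : Fin d} (h : i ∉ supp x) : x i = 0 := by
  by_contra hc; exact h (mem_supp.2 hc)

lemma supp_sub (x y : Fin d → ℝ) : supp (x - y) ⊆ supp x ∪ supp y := by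
  intro i hi
  rw [mem_supp] at hi
  simp only [Finset.mem_union, mem_supp]
  by_contra hc
  push_neg at hc
  simp [Pi.sub_apply, hc.1, hc.2] at hi

lemma supp_restrict (x : Fin d → ℝ) (T : Finset (Fin d)) : supp (_root_.restrict x T) ⊆ T := by
  intro i hi
  rw [mem_supp] at hi
  by_contra hc
  simp [_root_.restrict, hc] at hi

end CoSaMPAux

namespace CoSaMPAux

variable {d m : ℕ}

/-- norm squared of a restriction -/
lemma en_restrict_sq (x : Fin d → ℝ) (T : Finset (Fin d)) :
    euclNorm (_root_.restrict x T) ^ 2 = ∑ i ∈ T, x i ^ 2 := by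
  rw [en_sq]
  rw [← Finset.sum_filter_add_sum_filter_not Finset.univ (fun i => i ∈ T)]
  have h1 : ∀ i ∈ Finset.univ.filter (fun i => i ∈ T), _root_.restrict x T i ^ 2 = x i ^ 2 := by
    intro i hi; simp only [Finset.mem_filter] at hi; simp [_root_.restrict, hi.2]
  have h2 : ∀ i ∈ Finset.univ.filter (fun i => ¬ i ∈ T), _root_.restrict x T i ^ 2 = 0 := by
    intro i hi; simp only [Finset.mem_filter] at hi; simp [_root_.restrict, hi.2]
  rw [Finset.sum_congr rfl h1, Finset.sum_congr rfl h2, Finset.sum_const_zero, add_zero]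
  congr 1
  ext i; simp

lemma sum_sq_le_en_sq (x : Fin d → ℝ) (T : Finset (Fin d)) :
    ∑ i ∈ T, x i ^ 2 ≤ euclNorm x ^ 2 := by
  rw [en_sq]
  exact Finset.sum_le_sum_of_subset_of_nonneg (Finset.subset_univ T)
    (fun i _ _ => sq_nonneg _)

lemma en_restrict_le (x : Fin d → ℝ) (T : Finset (Fin d)) :
    euclNorm (_root_.restrict x T) ≤ euclNorm x := by
  have h := sum_sq_le_en_sq x T
  rw [← en_restrict_sq x T] at h
  nlinarith [en_nonneg (_root_.restrict x T), en_nonneg x]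

/-- dominance: small set with small values vs big set with big values -/
lemma le_of_sq_le_sq {a b : ℝ} (hb : 0 ≤ b) (h : a ^ 2 ≤ b ^ 2) : a ≤ b := by
  nlinarith

lemma sum_le_sum_dominates {α : Type*} [DecidableEq α] (s t : Finset α) (f : α → ℝ)
    (hf : ∀ i, 0 ≤ f i) (hc : s.card ≤ t.card)
    (hd : ∀ j ∈ s, ∀ i ∈ t, f j ≤ f i) :
    ∑ j ∈ s, f j ≤ ∑ i ∈ t, f i := by
  rcases t.eq_empty_or_nonempty with ht | ht
  · subst ht
    simp only [Finset.card_empty, Nat.le_zero, Finset.card_eq_zero] at hc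
    subst hc; simp
  · obtain ⟨i₀, hi₀, hmin⟩ := t.exists_min_image f ht
    calc ∑ j ∈ s, f j ≤ ∑ _j ∈ s, f i₀ := Finset.sum_le_sum fun j hj => hd j hj i₀ hi₀
    _ = s.card * f i₀ := by rw [Finset.sum_const, nsmul_eq_mul]
    _ ≤ t.card * f i₀ := by
        apply mul_le_mul_of_nonneg_right _ (hf i₀)
        exact_mod_cast hc
    _ ≤ ∑ i ∈ t, f i := by
        have := Finset.card_nsmul_le_sum t f (f i₀) hmin
        rwa [nsmul_eq_mul] at this

end CoSaMPAux

namespace CoSaMPAux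

variable {d m : ℕ}

lemma en_add_sq (x y : Fin d → ℝ) :
    euclNorm (x + y) ^ 2 = euclNorm x ^ 2 + euclNorm y ^ 2 + 2 * (x ⬝ᵥ y) := by
  simp only [en_sq, dotProduct, Pi.add_apply, Finset.mul_sum,
    ← Finset.sum_add_distrib]
  exact Finset.sum_congr rfl fun i _ => by ring

lemma en_sub_sq (x y : Fin d → ℝ) :
    euclNorm (x - y) ^ 2 = euclNorm x ^ 2 + euclNorm y ^ 2 - 2 * (x ⬝ᵥ y) := by
  simp only [en_sq, dotProduct, Pi.sub_apply, Finset.mul_sum]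
  rw [← Finset.sum_add_distrib, ← Finset.sum_sub_distrib]
  exact Finset.sum_congr rfl fun i _ => by ring

lemma supp_add (x y : Fin d → ℝ) : supp (x + y) ⊆ supp x ∪ supp y := by
  intro i hi
  rw [mem_supp] at hi
  simp only [Finset.mem_union, mem_supp]
  by_contra hc
  push_neg at hc
  simp [Pi.add_apply, hc.1, hc.2] at hi

lemma supp_smul (c : ℝ) (x : Fin d → ℝ) : supp (c • x) ⊆ supp x := by
  intro i hi
  rw [mem_supp] at hi
  rw [mem_supp]
  intro hc
  simp [Pi.smul_apply, hc] at hi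

lemma en_eq_zero {x : Fin d → ℝ} (h : euclNorm x = 0) : x = 0 := by
  have hs : ∑ i, x i ^ 2 = 0 := by
    have h2 := en_sq x
    rw [h] at h2
    simpa using h2.symm
  funext i
  have := (Finset.sum_eq_zero_iff_of_nonneg (fun i _ => sq_nonneg (x i))).1 hs i
    (Finset.mem_univ i)
  exact pow_eq_zero_iff two_ne_zero |>.1 this

lemma en_smul (c : ℝ) (x : Fin d → ℝ) : euclNorm (c • x) = |c| * euclNorm x := by
  unfold euclNorm
  have hc : ∑ i, (c • x) i ^ 2 = c ^ 2 * ∑ i, x i ^ 2 := by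
    rw [Finset.mul_sum]
    exact Finset.sum_congr rfl fun i _ => by
      simp only [Pi.smul_apply, smul_eq_mul]; ring
  rw [hc, Real.sqrt_mul (sq_nonneg c), Real.sqrt_sq_eq_abs]

lemma rip_inner_half {A : Matrix (Fin m) (Fin d) ℝ} {L : ℕ} {δ : ℝ} (hA : RIP A L δ)
    {x y : Fin d → ℝ} (hxy : (supp x ∪ supp y).card ≤ L) :
    A.mulVec x ⬝ᵥ A.mulVec y - x ⬝ᵥ y ≤ δ / 2 * (euclNorm x ^ 2 + euclNorm y ^ 2) := by
  have hadd : (supp (x + y)).card ≤ L :=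
    le_trans (Finset.card_le_card (supp_add x y)) hxy
  have hsub : (supp (x - y)).card ≤ L :=
    le_trans (Finset.card_le_card (supp_sub x y)) hxy
  have h1 := (hA.2.2 (x + y) hadd).2
  have h2 := (hA.2.2 (x - y) hsub).1
  rw [Matrix.mulVec_add] at h1
  rw [Matrix.mulVec_sub] at h2
  rw [en_add_sq (A.mulVec x) (A.mulVec y), en_add_sq x y] at h1
  rw [en_sub_sq (A.mulVec x) (A.mulVec y), en_sub_sq x y] at h2
  nlinarith [h1, h2]

lemma rip_inner {A : Matrix (Fin m) (Fin d) ℝ} {L : ℕ} {δ : ℝ} (hA : RIP A L δ)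
    {x y : Fin d → ℝ} (hxy : (supp x ∪ supp y).card ≤ L) :
    A.mulVec x ⬝ᵥ A.mulVec y - x ⬝ᵥ y ≤ δ * euclNorm x * euclNorm y := by
  rcases eq_or_ne (euclNorm x) 0 with hx | hx
  · have hx0 : x = 0 := en_eq_zero hx
    subst hx0
    simp [Matrix.mulVec_zero, zero_dotProduct, hx]
  rcases eq_or_ne (euclNorm y) 0 with hy | hy
  · have hy0 : y = 0 := en_eq_zero hy
    subst hy0
    simp [Matrix.mulVec_zero, dotProduct_zero, hy]
  have hex : 0 < euclNorm x := lt_of_le_of_ne (en_nonneg x) (Ne.symm hx)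
  have hey : 0 < euclNorm y := lt_of_le_of_ne (en_nonneg y) (Ne.symm hy)
  set ex := euclNorm x with hex_def
  set ey := euclNorm y with hey_def
  set t := Real.sqrt (ey / ex) with ht_def
  have ht : 0 < t := Real.sqrt_pos.2 (by positivity)
  have ht2 : t ^ 2 = ey / ex := Real.sq_sqrt (by positivity)
  have hcard : (supp (t • x) ∪ supp (t⁻¹ • y)).card ≤ L :=
    le_trans (Finset.card_le_card
      (Finset.union_subset_union (supp_smul _ _) (supp_smul _ _))) hxy
  have h := rip_inner_half hA hcard
  rw [Matrix.mulVec_smul, Matrix.mulVec_smul, smul_dotProduct,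
    dotProduct_smul, smul_dotProduct, dotProduct_smul,
    en_smul, en_smul, smul_eq_mul, smul_eq_mul, smul_eq_mul, smul_eq_mul] at h
  have habs : |t| = t := abs_of_pos ht
  have habs' : |t⁻¹| = t⁻¹ := abs_of_pos (by positivity)
  rw [habs, habs'] at h
  have htt : t * t⁻¹ = 1 := mul_inv_cancel₀ (ne_of_gt ht)
  have hsq1 : (t * ex) ^ 2 = ey * ex := by
    rw [mul_pow, ht2]
    field_simp
    try ring
  have hsq2 : (t⁻¹ * ey) ^ 2 = ex * ey := by
    rw [mul_pow, inv_pow, ht2]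
    field_simp
    try ring
  rw [hsq1, hsq2] at h
  calc A.mulVec x ⬝ᵥ A.mulVec y - x ⬝ᵥ y
      = t * (t⁻¹ * (A.mulVec x ⬝ᵥ A.mulVec y)) - t * (t⁻¹ * (x ⬝ᵥ y)) := by
        rw [← mul_assoc, ← mul_assoc, htt, one_mul, one_mul]
    _ ≤ δ / 2 * (ey * ex + ex * ey) := h
    _ = δ * ex * ey := by ring

lemma en_neg (x : Fin d → ℝ) : euclNorm (-x) = euclNorm x := by
  unfold euclNorm
  congr 1
  exact Finset.sum_congr rfl fun i _ => by simp

lemma supp_neg (x : Fin d → ℝ) : supp (-x) = supp x := by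
  ext i; simp [mem_supp]

lemma rip_inner_abs {A : Matrix (Fin m) (Fin d) ℝ} {L : ℕ} {δ : ℝ} (hA : RIP A L δ)
    {x y : Fin d → ℝ} (hxy : (supp x ∪ supp y).card ≤ L) :
    |A.mulVec x ⬝ᵥ A.mulVec y - x ⬝ᵥ y| ≤ δ * euclNorm x * euclNorm y := by
  rw [abs_le]
  constructor
  · have hcard : (supp (-x) ∪ supp y).card ≤ L := by rwa [supp_neg]
    have h := rip_inner hA hcard
    rw [Matrix.mulVec_neg, neg_dotProduct, neg_dotProduct, en_neg] at h
    linarith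
  · exact rip_inner hA hxy

end CoSaMPAux

namespace CoSaMPAux

variable {d m : ℕ}

lemma dot_restrict_self (x : Fin d → ℝ) (W : Finset (Fin d)) :
    x ⬝ᵥ _root_.restrict x W = euclNorm (_root_.restrict x W) ^ 2 := by
  rw [en_restrict_sq, dotProduct]
  have : ∀ i, x i * _root_.restrict x W i = if i ∈ W then x i ^ 2 else 0 := by
    intro i
    by_cases hi : i ∈ W <;> simp [_root_.restrict, hi] <;> ring
  simp_rw [this]
  rw [Finset.sum_ite_mem, Finset.univ_inter]

lemma restrict_sub (a b : Fin d → ℝ) (W : Finset (Fin d)) :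
    _root_.restrict (a - b) W = _root_.restrict a W - _root_.restrict b W := by
  funext i
  by_cases hi : i ∈ W <;> simp [_root_.restrict, hi]

lemma restrict_add (a b : Fin d → ℝ) (W : Finset (Fin d)) :
    _root_.restrict (a + b) W = _root_.restrict a W + _root_.restrict b W := by
  funext i
  by_cases hi : i ∈ W <;> simp [_root_.restrict, hi]

lemma en_sub_le (x y : Fin d → ℝ) : euclNorm (x - y) ≤ euclNorm x + euclNorm y := by
  have := en_triangle x (-y)
  rw [en_neg] at this
  simpa [sub_eq_add_neg] using this

lemma rip_err {A : Matrix (Fin m) (Fin d) ℝ} {L : ℕ} {δ : ℝ} (hA : RIP A L δ)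
    (v : Fin d → ℝ) (W : Finset (Fin d)) (hc : (W ∪ supp v).card ≤ L) :
    euclNorm (_root_.restrict (A.transpose.mulVec (A.mulVec v) - v) W) ≤ δ * euclNorm v := by
  set g := A.transpose.mulVec (A.mulVec v) with hg
  set z := _root_.restrict (g - v) W with hzdef
  have hz : euclNorm z ^ 2 = (g - v) ⬝ᵥ z := (dot_restrict_self _ _).symm
  have hcard : (supp v ∪ supp z).card ≤ L := by
    refine le_trans (Finset.card_le_card ?_) hc
    intro i hi
    rcases Finset.mem_union.1 hi with hi | hi
    · exact Finset.mem_union_right _ hi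
    · exact Finset.mem_union_left _ (supp_restrict _ _ hi)
  have hadj : g ⬝ᵥ z = A.mulVec v ⬝ᵥ A.mulVec z := by
    rw [hg, Matrix.mulVec_transpose, ← Matrix.dotProduct_mulVec]
  have hsub : (g - v) ⬝ᵥ z = A.mulVec v ⬝ᵥ A.mulVec z - v ⬝ᵥ z := by
    rw [sub_dotProduct, hadj]
  have hb := rip_inner_abs hA hcard
  have hkey : euclNorm z ^ 2 ≤ δ * euclNorm v * euclNorm z := by
    rw [hz, hsub]
    exact le_trans (le_abs_self _) hb
  rcases eq_or_lt_of_le (en_nonneg z) with h0 | h0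
  · rw [← h0]
    have h1 : 0 < δ := hA.1
    have h2 := en_nonneg v
    positivity
  · nlinarith [hkey, h0]

end CoSaMPAux

namespace CoSaMPAux

lemma sq_mono_abs {a b : ℝ} (h : |a| ≤ |b|) : a ^ 2 ≤ b ^ 2 := by
  rw [← sq_abs a, ← sq_abs b]
  exact pow_le_pow_left₀ (abs_nonneg a) h 2

lemma cross_helper {a q : ℝ} : q ^ 2 + 2 * (a * q) ≤ 2 * (a ^ 2 + q ^ 2) := by
  nlinarith [sq_nonneg (a - q), sq_nonneg a]

lemma add_sq_le_two {a b : ℝ} : (a + b) ^ 2 ≤ 2 * (a ^ 2 + b ^ 2) := by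
  nlinarith [sq_nonneg (a - b)]

lemma cancel_right {c w : ℝ} (h : c ^ 2 ≤ w * c) (hc : 0 < c) : c ≤ w := by
  nlinarith

lemma one_sub_sq_pos {a : ℝ} (h0 : 0 < a) (h1 : a < 1) : (0:ℝ) < 1 - a ^ 2 := by
  nlinarith

lemma sq_le_of_le_abs {a x : ℝ} (h0 : 0 ≤ a) (h : a ≤ |x|) : a ^ 2 ≤ x ^ 2 := by
  rw [← sq_abs x]
  exact pow_le_pow_left₀ h0 h 2

end CoSaMPAux

namespace CoSaMPAux

set_option maxHeartbeats 1000000 in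
lemma step_main {m d K : ℕ} {A : Matrix (Fin m) (Fin d) ℝ} {xS xp xn : Fin d → ℝ}
    {δ : ℝ} (hRIP : RIP A (4 * K) δ)
    (hS : (supp xS).card ≤ K) (hp : (supp xp).card ≤ K)
    (hstep : CoSaMPStep K A (A.mulVec xS) xp xn) :
    (supp xn).card ≤ K ∧
    euclNorm (xS - xn) ^ 2 ≤
      2 * δ ^ 2 * (1 + 2 * δ ^ 2) / (1 - δ ^ 2) * euclNorm (xS - xp) ^ 2 ∧
    ∀ xstar : ℝ, 0 ≤ xstar → (∀ i, xS i ≠ 0 → xstar ≤ |xS i|) →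
      2 * δ ^ 2 * euclNorm (xS - xp) ^ 2 < xstar ^ 2 → xn = xS := by
  obtain ⟨h, Sn, u, hcard_h, hmax, hLS, hSnU, hSncard, hSnmax, hxn⟩ := hstep
  have hδ0 : (0:ℝ) < δ := hRIP.1
  have hδ1 : δ < 1 := hRIP.2.1
  have h1d : (0:ℝ) < 1 - δ ^ 2 := one_sub_sq_pos hδ0 hδ1
  set S := supp xS with hSdef
  set Sp := supp xp with hSpdef
  set U : Finset (Fin d) := Sp ∪ h with hUdef
  set v : Fin d → ℝ := xS - xp with hvdef
  set w : Fin d → ℝ := xS - u with hwdef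
  have hres : A.mulVec xS - A.mulVec xp = A.mulVec v := (Matrix.mulVec_sub A xS xp).symm
  have hUcard : U.card ≤ 3 * K := by
    have hcu := Finset.card_union_le Sp h
    rw [← hUdef] at hcu
    omega
  have hTsub : supp v ⊆ S ∪ Sp := supp_sub xS xp
  have hTcard : (supp v).card ≤ 2 * K := by
    have h1 := Finset.card_le_card hTsub
    have h2 := Finset.card_union_le S Sp
    omega
  have hu_supp : supp u ⊆ U := hLS.1
  have hw_supp : supp w ⊆ S ∪ U := by
    refine subset_trans (supp_sub xS u) ?_
    exact Finset.union_subset_union Finset.Subset.rfl hu_supp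
  have hSU : (S ∪ U).card ≤ 4 * K := by
    have := Finset.card_union_le S U
    omega
  -- conclusion 1
  have hxn_supp : supp xn ⊆ Sn := by rw [hxn]; exact supp_restrict u Sn
  have hconc1 : (supp xn).card ≤ K := by
    have := Finset.card_le_card hxn_supp
    omega
  -- least squares orthogonality, in dot-product form
  have hLSdot : ∀ z : Fin d → ℝ, supp z ⊆ U → A.mulVec w ⬝ᵥ A.mulVec z = 0 := by
    intro z hz
    have hdot := hLS.2 z hz
    rw [dotProduct]
    rw [← hdot]
    refine Finset.sum_congr rfl fun i _ => ?_
    have : A.mulVec w i = A.mulVec xS i - A.mulVec u i := by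
      rw [hwdef, Matrix.mulVec_sub]
      rfl
    rw [this]
  -- ============ identification ============
  set T := supp v with hTdef
  set W1 := T \ h with hW1def
  set W2 := h \ T with hW2def
  set g := A.transpose.mulVec (A.mulVec v) with hgdef
  set e : Fin d → ℝ := g - v with hedef
  have hmax' : ∀ i ∈ h, ∀ j ∉ h, |g j| ≤ |g i| := by
    intro i hi j hj
    have := hmax i hi j hj
    rwa [hres] at this
  have hW1card : W1.card ≤ W2.card := by
    have h1 := Finset.card_inter_add_card_sdiff T h
    have h2 := Finset.card_inter_add_card_sdiff h T
    rw [← hW1def] at h1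
    rw [← hW2def] at h2
    have h3 : (T ∩ h).card = (h ∩ T).card := by rw [Finset.inter_comm]
    omega
  have hgdom : ∑ i ∈ W1, g i ^ 2 ≤ ∑ i ∈ W2, g i ^ 2 := by
    refine sum_le_sum_dominates _ _ _ (fun i => sq_nonneg _) hW1card ?_
    intro j hj i hi
    have hjnh : j ∉ h := (Finset.mem_sdiff.1 hj).2
    have hih : i ∈ h := (Finset.mem_sdiff.1 hi).1
    have habs := hmax' i hih j hjnh
    exact sq_mono_abs habs
  have hgW2 : _root_.restrict g W2 = _root_.restrict e W2 := by
    funext i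
    by_cases hi : i ∈ W2
    · have hv0 : v i = 0 := not_mem_supp (Finset.mem_sdiff.1 hi).2
      simp [_root_.restrict, hi, hedef, Pi.sub_apply, hv0]
    · simp [_root_.restrict, hi]
  have herr : euclNorm (_root_.restrict e (W1 ∪ W2)) ≤ δ * euclNorm v := by
    rw [hedef, hgdef]
    apply rip_err hRIP
    show (W1 ∪ W2 ∪ T).card ≤ 4 * K
    have hsub2 : W1 ∪ W2 ∪ T ⊆ h ∪ T := by
      intro i hi
      rcases Finset.mem_union.1 hi with hi | hi
      · rcases Finset.mem_union.1 hi with hi | hi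
        · exact Finset.mem_union_right _ (Finset.mem_sdiff.1 hi).1
        · exact Finset.mem_union_left _ (Finset.mem_sdiff.1 hi).1
      · exact Finset.mem_union_right _ hi
    have hc1 := Finset.card_le_card hsub2
    have hc2 := Finset.card_union_le h T
    omega
  have hdisjW : Disjoint W1 W2 := by
    rw [hW1def, hW2def]
    exact disjoint_sdiff_sdiff
  have hsplit : euclNorm (_root_.restrict e W1) ^ 2 + euclNorm (_root_.restrict e W2) ^ 2
      = euclNorm (_root_.restrict e (W1 ∪ W2)) ^ 2 := by
    rw [en_restrict_sq, en_restrict_sq, en_restrict_sq, Finset.sum_union hdisjW]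
  have htri : euclNorm (_root_.restrict v W1)
      ≤ euclNorm (_root_.restrict e W2) + euclNorm (_root_.restrict e W1) := by
    have hv_eq : _root_.restrict v W1 = _root_.restrict g W1 - _root_.restrict e W1 := by
      funext i
      by_cases hi : i ∈ W1 <;>
        simp [_root_.restrict, hi, hedef, Pi.sub_apply, sub_sub_cancel]
    rw [hv_eq]
    refine le_trans (en_sub_le _ _) ?_
    have hgle : euclNorm (_root_.restrict g W1) ≤ euclNorm (_root_.restrict e W2) := by
      apply le_of_sq_le_sq (en_nonneg _)
      rw [← hgW2, en_restrict_sq, en_restrict_sq]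
      exact hgdom
    linarith only [hgle]
  have hQ1 : euclNorm (_root_.restrict v W1) ^ 2 ≤ 2 * δ ^ 2 * euclNorm v ^ 2 := by
    have ha := en_nonneg (_root_.restrict e W1)
    have hb := en_nonneg (_root_.restrict e W2)
    have hc := en_nonneg (_root_.restrict v W1)
    have h1 : euclNorm (_root_.restrict v W1) ^ 2
        ≤ (euclNorm (_root_.restrict e W2) + euclNorm (_root_.restrict e W1)) ^ 2 :=
      pow_le_pow_left₀ hc htri 2
    have h2 : (euclNorm (_root_.restrict e W2) + euclNorm (_root_.restrict e W1)) ^ 2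
        ≤ 2 * (euclNorm (_root_.restrict e W2) ^ 2 + euclNorm (_root_.restrict e W1) ^ 2) :=
      add_sq_le_two
    have h3 : euclNorm (_root_.restrict e (W1 ∪ W2)) ^ 2 ≤ (δ * euclNorm v) ^ 2 :=
      pow_le_pow_left₀ (en_nonneg _) herr 2
    have h4 : (δ * euclNorm v) ^ 2 = δ ^ 2 * euclNorm v ^ 2 := by ring
    linarith only [h1, h2, h3, h4, hsplit]
  have hSUsub : S \ U ⊆ W1 := by
    intro i hi
    obtain ⟨hiS, hiU⟩ := Finset.mem_sdiff.1 hi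
    have hiSp : i ∉ Sp := fun hs => hiU (Finset.mem_union_left _ hs)
    have hih : i ∉ h := fun hs => hiU (Finset.mem_union_right _ hs)
    refine Finset.mem_sdiff.2 ⟨?_, hih⟩
    rw [hTdef, mem_supp, hvdef]
    have hxp0 : xp i = 0 := not_mem_supp hiSp
    have hxS0 : xS i ≠ 0 := mem_supp.1 hiS
    simp [Pi.sub_apply, hxp0, hxS0]
  have hQSU : ∑ i ∈ S \ U, xS i ^ 2 ≤ euclNorm (_root_.restrict v W1) ^ 2 := by
    rw [en_restrict_sq]
    calc ∑ i ∈ S \ U, xS i ^ 2 = ∑ i ∈ S \ U, v i ^ 2 := by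
          refine Finset.sum_congr rfl fun i hi => ?_
          have hiSp : i ∉ Sp := fun hs => (Finset.mem_sdiff.1 hi).2 (Finset.mem_union_left _ hs)
          have hxp0 : xp i = 0 := not_mem_supp hiSp
          rw [hvdef]
          simp [Pi.sub_apply, hxp0]
      _ ≤ ∑ i ∈ W1, v i ^ 2 :=
          Finset.sum_le_sum_of_subset_of_nonneg hSUsub (fun _ _ _ => sq_nonneg _)
  have hQSU2 : ∑ i ∈ S \ U, xS i ^ 2 ≤ 2 * δ ^ 2 * euclNorm v ^ 2 :=
    le_trans hQSU hQ1
  -- ============ least squares ============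
  set wU := _root_.restrict w U with hwUdef
  have hwU1 : euclNorm wU ^ 2 = w ⬝ᵥ wU := (dot_restrict_self w U).symm
  have hzero : A.mulVec w ⬝ᵥ A.mulVec wU = 0 := hLSdot wU (supp_restrict _ _)
  have hcross : |A.mulVec w ⬝ᵥ A.mulVec wU - w ⬝ᵥ wU| ≤ δ * euclNorm w * euclNorm wU := by
    apply rip_inner_abs hRIP
    refine le_trans (Finset.card_le_card ?_) hSU
    intro i hi
    rcases Finset.mem_union.1 hi with hi | hi
    · exact hw_supp hi
    · exact Finset.mem_union_right _ (supp_restrict _ _ hi)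
  have hwUle : euclNorm wU ≤ δ * euclNorm w := by
    have hkey : euclNorm wU ^ 2 ≤ δ * euclNorm w * euclNorm wU := by
      rw [hwU1]
      calc w ⬝ᵥ wU = -(A.mulVec w ⬝ᵥ A.mulVec wU - w ⬝ᵥ wU) := by rw [hzero]; ring
        _ ≤ |A.mulVec w ⬝ᵥ A.mulVec wU - w ⬝ᵥ wU| := neg_le_abs _
        _ ≤ δ * euclNorm w * euclNorm wU := hcross
    rcases eq_or_lt_of_le (en_nonneg wU) with h0 | h0
    · rw [← h0]
      have h1 := en_nonneg w
      positivity
    · exact cancel_right (by linarith only [hkey]) h0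
  have hw_split : euclNorm w ^ 2 = euclNorm wU ^ 2 + ∑ i ∈ Uᶜ, w i ^ 2 := by
    rw [en_sq, en_restrict_sq, Finset.sum_add_sum_compl U (fun i => w i ^ 2)]
  have hoffU : ∑ i ∈ Uᶜ, w i ^ 2 = ∑ i ∈ S \ U, xS i ^ 2 := by
    calc ∑ i ∈ Uᶜ, w i ^ 2 = ∑ i ∈ Uᶜ, xS i ^ 2 := by
          refine Finset.sum_congr rfl fun i hi => ?_
          have hiU : i ∉ U := Finset.mem_compl.1 hi
          have hu0 : u i = 0 := not_mem_supp (fun hs => hiU (hu_supp hs))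
          rw [hwdef]
          simp [Pi.sub_apply, hu0]
      _ = ∑ i ∈ S \ U, xS i ^ 2 := by
          refine (Finset.sum_subset ?_ ?_).symm
          · intro i hi
            exact Finset.mem_compl.2 (Finset.mem_sdiff.1 hi).2
          · intro i hi hni
            have hiU : i ∉ U := Finset.mem_compl.1 hi
            have hiS : i ∉ S := fun hs => hni (Finset.mem_sdiff.2 ⟨hs, hiU⟩)
            have : xS i = 0 := not_mem_supp hiS
            rw [this]
            ring
  have hwU2 : euclNorm wU ^ 2 ≤ δ ^ 2 * euclNorm w ^ 2 := by
    have h1 : euclNorm wU ^ 2 ≤ (δ * euclNorm w) ^ 2 :=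
      pow_le_pow_left₀ (en_nonneg wU) hwUle 2
    have h2 : (δ * euclNorm w) ^ 2 = δ ^ 2 * euclNorm w ^ 2 := by ring
    linarith only [h1, h2]
  have hwsq : (1 - δ ^ 2) * euclNorm w ^ 2 ≤ ∑ i ∈ S \ U, xS i ^ 2 := by
    linarith only [hw_split, hoffU, hwU2]
  -- ============ pruning ============
  set J := (S ∩ U) \ Sn with hJdef
  set O := (S \ Sn) \ U with hOdef
  have hc1 : euclNorm (xS - xn) ^ 2 = ∑ i ∈ Sn, w i ^ 2 + ∑ i ∈ Snᶜ, xS i ^ 2 := by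
    rw [en_sq, ← Finset.sum_add_sum_compl Sn (fun i => (xS - xn) i ^ 2)]
    congr 1
    · refine Finset.sum_congr rfl fun i hi => ?_
      rw [hxn]
      simp [Pi.sub_apply, _root_.restrict, hi, hwdef]
    · refine Finset.sum_congr rfl fun i hi => ?_
      have hni : i ∉ Sn := Finset.mem_compl.1 hi
      rw [hxn]
      simp [Pi.sub_apply, _root_.restrict, hni]
  have hc2 : ∑ i ∈ Snᶜ, xS i ^ 2 = ∑ i ∈ J, xS i ^ 2 + ∑ i ∈ O, xS i ^ 2 := by
    have hJO : Disjoint J O := by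
      apply Finset.disjoint_left.2
      intro i hiJ hiO
      exact (Finset.mem_sdiff.1 hiO).2 (Finset.mem_inter.1 (Finset.mem_sdiff.1 hiJ).1).2
    have hJO_eq : S \ Sn = J ∪ O := by
      ext i
      simp only [hJdef, hOdef, Finset.mem_sdiff, Finset.mem_union, Finset.mem_inter]
      tauto
    calc ∑ i ∈ Snᶜ, xS i ^ 2 = ∑ i ∈ S \ Sn, xS i ^ 2 := by
          refine (Finset.sum_subset ?_ ?_).symm
          · intro i hi
            exact Finset.mem_compl.2 (Finset.mem_sdiff.1 hi).2
          · intro i hi hni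
            have hSn : i ∉ Sn := Finset.mem_compl.1 hi
            have hiS : i ∉ S := fun hs => hni (Finset.mem_sdiff.2 ⟨hs, hSn⟩)
            rw [not_mem_supp hiS]
            ring
      _ = ∑ i ∈ J, xS i ^ 2 + ∑ i ∈ O, xS i ^ 2 := by
          rw [hJO_eq, Finset.sum_union hJO]
  have hc3 : ∑ i ∈ O, xS i ^ 2 = ∑ i ∈ O, w i ^ 2 := by
    refine Finset.sum_congr rfl fun i hi => ?_
    have hiU : i ∉ U := (Finset.mem_sdiff.1 hi).2
    have hu0 : u i = 0 := not_mem_supp (fun hs => hiU (hu_supp hs))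
    rw [hwdef]
    simp [Pi.sub_apply, hu0]
  have hc4 : euclNorm (_root_.restrict xS J)
      ≤ euclNorm (_root_.restrict w J) + euclNorm (_root_.restrict u J) := by
    have : _root_.restrict xS J = _root_.restrict w J + _root_.restrict u J := by
      funext i
      by_cases hi : i ∈ J <;>
        simp [_root_.restrict, hi, hwdef, Pi.sub_apply, Pi.add_apply, sub_add_cancel]
    rw [this]
    exact en_triangle _ _
  have hc5 : ∑ i ∈ J, u i ^ 2 ≤ ∑ i ∈ Sn \ S, u i ^ 2 := by
    have hSnS : Sn \ (S ∩ U) = Sn \ S := by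
      ext i
      simp only [Finset.mem_sdiff, Finset.mem_inter]
      constructor
      · rintro ⟨hi, hns⟩
        exact ⟨hi, fun hs => hns ⟨hs, hSnU hi⟩⟩
      · rintro ⟨hi, hns⟩
        exact ⟨hi, fun hs => hns hs.1⟩
    rw [← hSnS]
    refine sum_le_sum_dominates _ _ _ (fun i => sq_nonneg _) ?_ ?_
    · have h1 := Finset.card_inter_add_card_sdiff (S ∩ U) Sn
      rw [← hJdef] at h1
      have h2 := Finset.card_inter_add_card_sdiff Sn (S ∩ U)
      have h3 : ((S ∩ U) ∩ Sn).card = (Sn ∩ (S ∩ U)).card := by rw [Finset.inter_comm]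
      have h4 : (S ∩ U).card ≤ K := le_trans (Finset.card_le_card (Finset.inter_subset_left)) hS
      omega
    · intro j hj i hi
      have hjn : j ∉ Sn := (Finset.mem_sdiff.1 hj).2
      have hin : i ∈ Sn := (Finset.mem_sdiff.1 hi).1
      have habs := hSnmax i hin j hjn
      exact sq_mono_abs habs
  have hc6 : ∑ i ∈ Sn \ S, u i ^ 2 = ∑ i ∈ Sn \ S, w i ^ 2 := by
    refine Finset.sum_congr rfl fun i hi => ?_
    have hiS : i ∉ S := (Finset.mem_sdiff.1 hi).2
    have hx0 : xS i = 0 := not_mem_supp hiS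
    rw [hwdef]
    simp [Pi.sub_apply, hx0]
  -- assemble pruning
  have hmain : euclNorm (xS - xn) ^ 2 ≤ (1 + 2 * δ ^ 2) * euclNorm w ^ 2 := by
    have hna := en_restrict_sq w J
    have hnq := en_restrict_sq w (Sn \ S)
    have hnb := en_restrict_sq u J
    set na := euclNorm (_root_.restrict w J) with hnadef
    set nq := euclNorm (_root_.restrict w (Sn \ S)) with hnqdef
    set nb := euclNorm (_root_.restrict u J) with hnbdef
    have hna0 : 0 ≤ na := en_nonneg _
    have hnq0 : 0 ≤ nq := en_nonneg _
    have hnb0 : 0 ≤ nb := en_nonneg _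
    have hnb_le : nb ≤ nq := by
      apply le_of_sq_le_sq hnq0
      rw [hnb, hnq]
      calc ∑ i ∈ J, u i ^ 2 ≤ ∑ i ∈ Sn \ S, u i ^ 2 := hc5
        _ = ∑ i ∈ Sn \ S, w i ^ 2 := hc6
    have hJxS : ∑ i ∈ J, xS i ^ 2 ≤ (na + nq) ^ 2 := by
      have h1 : euclNorm (_root_.restrict xS J) ≤ na + nq := le_trans hc4 (by linarith only [hnb_le])
      have h0 := en_nonneg (_root_.restrict xS J)
      calc ∑ i ∈ J, xS i ^ 2 = euclNorm (_root_.restrict xS J) ^ 2 :=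
            (en_restrict_sq xS J).symm
        _ ≤ (na + nq) ^ 2 := pow_le_pow_left₀ h0 h1 2
    have hsum3 : ∑ i ∈ Sn, w i ^ 2 + ∑ i ∈ O, w i ^ 2 + na ^ 2 ≤ euclNorm w ^ 2 := by
      have hd1 : Disjoint Sn O := Finset.disjoint_left.2 fun i hi hio =>
        (Finset.mem_sdiff.1 (Finset.mem_sdiff.1 hio).1).2 hi
      have hd2 : Disjoint (Sn ∪ O) J := by
        apply Finset.disjoint_left.2
        intro i hi hij
        rcases Finset.mem_union.1 hi with hi | hi
        · exact (Finset.mem_sdiff.1 hij).2 hi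
        · exact (Finset.mem_sdiff.1 hi).2 (Finset.mem_inter.1 (Finset.mem_sdiff.1 hij).1).2
      calc ∑ i ∈ Sn, w i ^ 2 + ∑ i ∈ O, w i ^ 2 + na ^ 2
          = ∑ i ∈ Sn ∪ O ∪ J, w i ^ 2 := by
            rw [Finset.sum_union hd2, Finset.sum_union hd1, hna]
        _ ≤ euclNorm w ^ 2 := sum_sq_le_en_sq w _
    have hsum2 : na ^ 2 + nq ^ 2 ≤ euclNorm wU ^ 2 := by
      have hd : Disjoint J (Sn \ S) := Finset.disjoint_left.2 fun i hij his =>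
        (Finset.mem_sdiff.1 his).2 (Finset.mem_inter.1 (Finset.mem_sdiff.1 hij).1).1
      have hsubU : J ∪ (Sn \ S) ⊆ U := by
        intro i hi
        rcases Finset.mem_union.1 hi with hi | hi
        · exact (Finset.mem_inter.1 (Finset.mem_sdiff.1 hi).1).2
        · exact hSnU (Finset.mem_sdiff.1 hi).1
      calc na ^ 2 + nq ^ 2 = ∑ i ∈ J ∪ (Sn \ S), w i ^ 2 := by
            rw [Finset.sum_union hd, hna, hnq]
        _ ≤ ∑ i ∈ U, w i ^ 2 :=
            Finset.sum_le_sum_of_subset_of_nonneg hsubU (fun _ _ _ => sq_nonneg _)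
        _ = euclNorm wU ^ 2 := (en_restrict_sq w U).symm
    have e1 : (na + nq) ^ 2 = na ^ 2 + nq ^ 2 + 2 * (na * nq) := by ring
    have e3 : nq ^ 2 + 2 * (na * nq) ≤ 2 * (na ^ 2 + nq ^ 2) := cross_helper
    rw [hc1, hc2, hc3]
    linarith only [hJxS, hsum3, hsum2, hwU2, e1, e3]
  -- conclusion 2
  have hconc2 : euclNorm (xS - xn) ^ 2 ≤
      2 * δ ^ 2 * (1 + 2 * δ ^ 2) / (1 - δ ^ 2) * euclNorm v ^ 2 := by
    have hw2 : euclNorm w ^ 2 ≤ 2 * δ ^ 2 * euclNorm v ^ 2 / (1 - δ ^ 2) := by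
      rw [le_div_iff₀ h1d]
      calc euclNorm w ^ 2 * (1 - δ ^ 2) = (1 - δ ^ 2) * euclNorm w ^ 2 := by ring
        _ ≤ ∑ i ∈ S \ U, xS i ^ 2 := hwsq
        _ ≤ 2 * δ ^ 2 * euclNorm v ^ 2 := hQSU2
    calc euclNorm (xS - xn) ^ 2 ≤ (1 + 2 * δ ^ 2) * euclNorm w ^ 2 := hmain
      _ ≤ (1 + 2 * δ ^ 2) * (2 * δ ^ 2 * euclNorm v ^ 2 / (1 - δ ^ 2)) := by
          apply mul_le_mul_of_nonneg_left hw2 (by positivity)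
      _ = 2 * δ ^ 2 * (1 + 2 * δ ^ 2) / (1 - δ ^ 2) * euclNorm v ^ 2 := by
          field_simp
  refine ⟨hconc1, hconc2, ?_⟩
  -- ============ exact recovery ============
  intro xstar hx0 hxlb hlt
  have hQ : ∑ i ∈ S \ U, xS i ^ 2 < xstar ^ 2 := lt_of_le_of_lt hQSU2 hlt
  have hSU_empty : S \ U = ∅ := by
    by_contra hne
    obtain ⟨i, hi⟩ := Finset.nonempty_iff_ne_empty.2 hne
    have hiS : i ∈ S := (Finset.mem_sdiff.1 hi).1
    have hxne : xS i ≠ 0 := mem_supp.1 hiS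
    have h1 : xstar ≤ |xS i| := hxlb i hxne
    have h2 : xstar ^ 2 ≤ xS i ^ 2 := sq_le_of_le_abs hx0 h1
    have h3 : xS i ^ 2 ≤ ∑ j ∈ S \ U, xS j ^ 2 :=
      Finset.single_le_sum (f := fun j => xS j ^ 2) (fun _ _ => sq_nonneg _) hi
    linarith only [h2, h3, hQ]
  have hSsubU : S ⊆ U := Finset.sdiff_eq_empty_iff_subset.1 hSU_empty
  have hw_suppU : supp w ⊆ U :=
    subset_trans hw_supp (Finset.union_subset hSsubU Finset.Subset.rfl)
  have hAw : A.mulVec w ⬝ᵥ A.mulVec w = 0 := hLSdot w hw_suppU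
  have henAw : euclNorm (A.mulVec w) ^ 2 = A.mulVec w ⬝ᵥ A.mulVec w := by
    rw [en_sq, dotProduct]
    exact Finset.sum_congr rfl fun i _ => (sq (A.mulVec w i)) ▸ (by ring)
  have hripw := (hRIP.2.2 w (by
    have := Finset.card_le_card hw_suppU
    omega)).1
  have hw0 : w = 0 := by
    apply en_eq_zero
    have hpos : (0:ℝ) < 1 - δ := by linarith only [hδ1]
    have h2 : euclNorm w ^ 2 ≤ 0 := by
      rw [henAw, hAw] at hripw
      have h5 : (1 - δ) * euclNorm w ^ 2 ≤ (1 - δ) * 0 := by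
        rw [mul_zero]
        exact hripw
      exact le_of_mul_le_mul_left h5 hpos
    have h3 : euclNorm w ^ 2 = 0 :=
      le_antisymm h2 (by positivity)
    exact pow_eq_zero_iff two_ne_zero |>.1 h3
  have huxS : u = xS := by
    funext i
    have := congrFun hw0 i
    rw [hwdef] at this
    simp only [Pi.sub_apply, Pi.zero_apply] at this
    linarith only [this]
  rw [hxn, huxS]
  funext i
  by_cases hi : i ∈ Sn
  · simp [_root_.restrict, hi]
  · simp only [_root_.restrict, hi, if_false]
    by_contra hne
    have hne' : xS i ≠ 0 := fun hcon => hne hcon.symm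
    have hSn_sub : Sn ⊆ S := by
      intro j hj
      have habs := hSnmax j hj i hi
      rw [huxS] at habs
      rw [hSdef, mem_supp]
      intro hj0
      rw [hj0] at habs
      simp at habs
      exact hne' habs
    have hins : insert i Sn ⊆ S := Finset.insert_subset (mem_supp.2 hne') hSn_sub
    have hcard := Finset.card_le_card hins
    rw [Finset.card_insert_of_notMem hi] at hcard
    omega

end CoSaMPAux

set_option maxHeartbeats 1000000 in
/-- Remark 1: in the noiseless case, CoSaMP starting from `x⁰ = 0`
recovers `x_S` exactly after `k` iterations as soon as `ρ_{4K}^k ‖x_S‖ < x*_K`, where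
`x*_K` is the smallest nonzero magnitude of `x_S`. -/
theorem cosamp_noiseless_iterations
    {m d K : ℕ} (A : Matrix (Fin m) (Fin d) ℝ) (xS : Fin d → ℝ)
    (δ3 δ4 ρ4 : ℝ)
    (hxS : (supp xS).card ≤ K)
    (hRIP3 : RIP A (3 * K) δ3) (hRIP4 : RIP A (4 * K) δ4)
    (hρ4 : ρ4 = Real.sqrt (2 * δ4 ^ 2 * (1 + 2 * δ4 ^ 2) / (1 - δ4 ^ 2)))
    (hρ4lt : ρ4 < 1)
    (xstarK : ℝ)
    (hxstar_le : ∀ i, xS i ≠ 0 → xstarK ≤ |xS i|)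
    (hxstar_mem : ∃ i, xS i ≠ 0 ∧ |xS i| = xstarK)
    (X : ℕ → Fin d → ℝ) (hX0 : X 0 = 0) (k : ℕ)
    (hsteps : ∀ i < k, CoSaMPStep K A (A.mulVec xS) (X i) (X (i + 1)))
    (hgap : ρ4 ^ k * euclNorm xS < xstarK) :
    X k = xS := by
  have hδ0 : (0:ℝ) < δ4 := hRIP4.1
  have hδ1 : δ4 < 1 := hRIP4.2.1
  have h1d : (0:ℝ) < 1 - δ4 ^ 2 := CoSaMPAux.one_sub_sq_pos hδ0 hδ1
  set C : ℝ := 2 * δ4 ^ 2 * (1 + 2 * δ4 ^ 2) / (1 - δ4 ^ 2) with hC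
  have hCnn : 0 ≤ C := by positivity
  have hρsq : ρ4 ^ 2 = C := by
    rw [hρ4]
    exact Real.sq_sqrt (by positivity)
  have hρnn : 0 ≤ ρ4 := by
    rw [hρ4]
    exact Real.sqrt_nonneg _
  obtain ⟨i0, hi0ne, hi0eq⟩ := hxstar_mem
  have hxstar_nonneg : 0 ≤ xstarK := hi0eq ▸ abs_nonneg _
  have hxstar_le_norm : xstarK ≤ euclNorm xS := by
    rw [← hi0eq]
    have h1 : xS i0 ^ 2 ≤ ∑ i, xS i ^ 2 :=
      Finset.single_le_sum (f := fun i => xS i ^ 2) (fun _ _ => sq_nonneg _)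
        (Finset.mem_univ i0)
    calc |xS i0| = Real.sqrt (xS i0 ^ 2) := (Real.sqrt_sq_eq_abs _).symm
      _ ≤ euclNorm xS := Real.sqrt_le_sqrt h1
  rcases Nat.eq_zero_or_pos k with hk0 | hkpos
  · exfalso
    subst hk0
    rw [pow_zero, one_mul] at hgap
    linarith only [hgap, hxstar_le_norm]
  have key : ∀ n, n ≤ k →
      (supp (X n)).card ≤ K ∧ euclNorm (xS - X n) ^ 2 ≤ C ^ n * euclNorm xS ^ 2 := by
    intro n
    induction n with
    | zero =>
      intro _
      constructor
      · have hsupp0 : supp (X 0) = ∅ := by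
          ext i
          simp [CoSaMPAux.mem_supp, hX0]
        rw [hsupp0]
        simp
      · rw [hX0, sub_zero, pow_zero, one_mul]
    | succ n ih =>
      intro hsk
      have hn : n ≤ k := Nat.le_of_succ_le hsk
      obtain ⟨hcard, herr⟩ := ih hn
      have hstep := hsteps n (Nat.lt_of_succ_le hsk)
      obtain ⟨hcn, hcontr, _⟩ := CoSaMPAux.step_main hRIP4 hxS hcard hstep
      refine ⟨hcn, ?_⟩
      calc euclNorm (xS - X (n + 1)) ^ 2 ≤ C * euclNorm (xS - X n) ^ 2 := hcontr
        _ ≤ C * (C ^ n * euclNorm xS ^ 2) := mul_le_mul_of_nonneg_left herr hCnn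
        _ = C ^ (n + 1) * euclNorm xS ^ 2 := by ring
  obtain ⟨k', rfl⟩ : ∃ k', k = k' + 1 := by
    cases k with
    | zero => omega
    | succ k' => exact ⟨k', rfl⟩
  obtain ⟨hcard, herr⟩ := key k' (Nat.le_succ _)
  have hstep := hsteps k' (Nat.lt_succ_self _)
  obtain ⟨_, _, hfin⟩ := CoSaMPAux.step_main hRIP4 hxS hcard hstep
  apply hfin xstarK hxstar_nonneg hxstar_le
  have h2d : 2 * δ4 ^ 2 ≤ C := by
    rw [hC, le_div_iff₀ h1d]
    nlinarith [sq_nonneg δ4, hδ0]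
  calc 2 * δ4 ^ 2 * euclNorm (xS - X k') ^ 2
      ≤ C * (C ^ k' * euclNorm xS ^ 2) :=
        mul_le_mul h2d herr (sq_nonneg _) hCnn
    _ = C ^ (k' + 1) * euclNorm xS ^ 2 := by ring
    _ = (ρ4 ^ (k' + 1)) ^ 2 * euclNorm xS ^ 2 := by
        rw [← pow_mul, mul_comm (k' + 1) 2, pow_mul, hρsq]
    _ = (ρ4 ^ (k' + 1) * euclNorm xS) ^ 2 := by ring
    _ < xstarK ^ 2 := by
        have hnn : 0 ≤ ρ4 ^ (k' + 1) * euclNorm xS := by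
          have := CoSaMPAux.en_nonneg xS
          positivity
        exact pow_lt_pow_left₀ hgap hnn two_ne_zero
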